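/- arXiv:1009.4506 — 2 statements merged into one kernel-verified Lean document; each statement's English description precedes it below -/
import Mathlib

section
/- For a prime implication filter P of an MV-algebra L, the poset of prime implication filters of the quotient L/ℓ(P) is order-isomorphic to the poset PSpec(P) of prime implication filters of L comparable to P, ordered by inclusion. -/
/-- An MV-algebra `(α, ⊕, ¬, 0)` with the standard axioms. -/
class MV (α : Type*) extends Add α, Neg α, Zero α where
  add_assoc : ∀ a b c : α, a + (b + c) = (a + b) + c
  add_comm : ∀ a b : α, a + b = b + a
  add_zero : ∀ a : α, a + 0 = a
  neg_neg : ∀ a : α, - -a = a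
  add_neg_zero : ∀ a : α, a + -(0 : α) = -(0 : α)
  luk : ∀ a b : α, -(-a + b) + b = -(-b + a) + a

namespace MV

variable {α : Type*} [MV α]

/-- The top element `1 = ¬0`. -/
def one (α : Type*) [MV α] : α := -(0 : α)

/-- Implication `x → y = ¬x ⊕ y`. -/
def imp (a b : α) : α := -a + b

/-- Strong conjunction `x ⊗ y = ¬(¬x ⊕ ¬y)`. -/
def otimes (a b : α) : α := -(-a + -b)

/-- Join `x ∨ y = (x → y) → y`. -/
def sup (a b : α) : α := imp (imp a b) b

/-- Meet `x ∧ y = ¬(¬x ∨ ¬y)`. -/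
def inf (a b : α) : α := -(sup (-a) (-b))

/-- Order: `x ≤ y` iff `x → y = 1`. -/
def le (a b : α) : Prop := imp a b = one α

/-- Strict order. -/
def lt (a b : α) : Prop := le a b ∧ a ≠ b

/-- `n`-fold `⊗`-power. -/
def pow (a : α) : ℕ → α
  | 0 => one α
  | n + 1 => otimes a (pow a n)

/-- An implication filter: a lattice filter closed under `⊗`. -/
def IsImpFilter (F : Set α) : Prop :=
  one α ∈ F ∧ (∀ x ∈ F, ∀ y : α, le x y → y ∈ F) ∧
    (∀ x ∈ F, ∀ y ∈ F, inf x y ∈ F) ∧ (∀ x ∈ F, ∀ y ∈ F, otimes x y ∈ F)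

/-- A prime implication filter: proper and `x ∨ y ∈ F → x ∈ F ∨ y ∈ F`. -/
def IsPrime (F : Set α) : Prop :=
  IsImpFilter F ∧ F ≠ Set.univ ∧ ∀ x y : α, sup x y ∈ F → x ∈ F ∨ y ∈ F

/-- A minimal prime implication filter. -/
def IsMinimalPrime (F : Set α) : Prop :=
  IsPrime F ∧ ∀ G : Set α, IsPrime G → G ⊆ F → G = F

/-- A maximal proper implication filter. -/
def IsMaximal (F : Set α) : Prop :=
  IsImpFilter F ∧ F ≠ Set.univ ∧
    ∀ G : Set α, IsImpFilter G → G ≠ Set.univ → F ⊆ G → G = F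

/-- A counit: `u < 1` joining to `1` with some `v < 1`. -/
def IsCounit (u : α) : Prop :=
  lt u (one α) ∧ ∃ v : α, lt v (one α) ∧ sup u v = one α

/-- The implication filter generated by a set. -/
def gen (S : Set α) : Set α := ⋂₀ {F : Set α | IsImpFilter F ∧ S ⊆ F}

/-- The Conrad filter: the implication filter generated by all counits. -/
def conrad (α : Type*) [MV α] : Set α := gen {u : α | IsCounit u}

/-- The localizing filter `ℓ(P)`, generated by `{x → p : p ∈ P, x ∉ P}`. -/
def locFilter (P : Set α) : Set α :=
  gen {z : α | ∃ x : α, x ∉ P ∧ ∃ p ∈ P, z = imp x p}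

end MV

namespace MVAux
open MV
variable {α : Type*} [MV α]

lemma add_one (a : α) : a + one α = one α := MV.add_neg_zero a
lemma one_add (a : α) : one α + a = one α := by rw [MV.add_comm]; exact add_one a
lemma neg_one : -(one α) = (0 : α) := MV.neg_neg 0
lemma zero_add (a : α) : (0 : α) + a = a := by rw [MV.add_comm]; exact MV.add_zero a

lemma neg_add_self (a : α) : -a + a = one α := by
  have h := MV.luk (one α) a
  rw [neg_one, zero_add, add_one] at h
  exact h

lemma add_neg_self (a : α) : a + -a = one α := by rw [MV.add_comm]; exact neg_add_self a

lemma le_refl (a : α) : le a a := neg_add_self a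
lemma le_one (a : α) : le a (one α) := add_one (-a)
lemma zero_le (a : α) : le (0 : α) a := by
  show -(0:α) + a = one α
  rw [MV.add_comm]
  exact MV.add_neg_zero a

lemma one_le_iff {a : α} : le (one α) a ↔ a = one α := by
  show -(one α) + a = one α ↔ _
  rw [neg_one, zero_add]

lemma le_add_mono {a b : α} (h : le a b) (c : α) : le (a + c) (b + c) := by
  show -(a + c) + (b + c) = one α
  have h' : -a + b = one α := h
  calc -(a + c) + (b + c) = -(- -a + c) + (c + b) := by rw [MV.neg_neg, MV.add_comm b c]
    _ = (-(- -a + c) + c) + b := MV.add_assoc _ _ _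
    _ = (-(-c + -a) + -a) + b := by rw [MV.luk (-a) c]
    _ = -(-c + -a) + (-a + b) := (MV.add_assoc _ _ _).symm
    _ = one α := by rw [h', add_one]

lemma le_trans {a b c : α} (hab : le a b) (hbc : le b c) : le a c := by
  have h := le_add_mono hbc (-a)
  rw [MV.add_comm b (-a), MV.add_comm c (-a)] at h
  have hab' : -a + b = one α := hab
  rw [hab'] at h
  exact one_le_iff.mp h

lemma le_antisymm {a b : α} (hab : le a b) (hba : le b a) : a = b := by
  have h := MV.luk a b
  have hab' : -a + b = one α := hab
  have hba' : -b + a = one α := hba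
  rw [hab', hba', neg_one, zero_add, zero_add] at h
  exact h.symm

lemma neg_le_neg {a b : α} (h : le a b) : le (-b) (-a) := by
  show -(-b) + -a = one α
  rw [MV.neg_neg, MV.add_comm]
  exact h

lemma le_neg_swap {a b : α} : le a (-b) ↔ le b (-a) := by
  show -a + -b = one α ↔ -b + -a = one α
  rw [MV.add_comm]

lemma le_of_neg_le_neg {a b : α} (h : le (-b) (-a)) : le a b := by
  have := neg_le_neg h
  rwa [MV.neg_neg, MV.neg_neg] at this

end MVAux
namespace MVAux
open MV
variable {α : Type*} [MV α]

lemma sup_comm (a b : α) : sup a b = sup b a := MV.luk a b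

lemma le_sup_left (a b : α) : le a (sup a b) := by
  show -a + (-(-a + b) + b) = one α
  rw [MV.add_comm (-(-a + b)) b, MV.add_assoc]
  exact add_neg_self (-a + b)

lemma le_sup_right (a b : α) : le b (sup a b) := by
  show -b + (-(-a + b) + b) = one α
  rw [MV.add_comm (-(-a + b)) b, MV.add_assoc, neg_add_self, one_add]

lemma sup_of_le {a b : α} (h : le a b) : sup a b = b := by
  show -(-a + b) + b = b
  have h' : -a + b = one α := h
  rw [h', neg_one, zero_add]

lemma sup_of_le' {a b : α} (h : le a b) : sup b a = b := by
  rw [sup_comm]; exact sup_of_le h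

lemma sup_le {a b c : α} (hac : le a c) (hbc : le b c) : le (sup a b) c := by
  have h1 : le (-c + b) (-a + b) := le_add_mono (neg_le_neg hac) b
  have h2 : le (-(-a + b) + b) (-(-c + b) + b) := le_add_mono (neg_le_neg h1) b
  have h3 : le (sup a b) (sup c b) := h2
  rw [sup_of_le' hbc] at h3
  exact h3

lemma neg_sup (a b : α) : -(sup a b) = inf (-a) (-b) := by
  show _ = -(sup (- -a) (- -b))
  rw [MV.neg_neg, MV.neg_neg]

lemma inf_le_left (a b : α) : le (inf a b) a := by
  show -(-(sup (-a) (-b))) + a = one α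
  rw [MV.neg_neg, MV.add_comm]
  have h := le_sup_left (-a) (-b)
  show a + sup (-a) (-b) = one α
  have h' : -(-a) + sup (-a) (-b) = one α := h
  rwa [MV.neg_neg] at h'

lemma inf_le_right (a b : α) : le (inf a b) b := by
  show -(-(sup (-a) (-b))) + b = one α
  rw [MV.neg_neg, MV.add_comm]
  have h' : -(-b) + sup (-a) (-b) = one α := le_sup_right (-a) (-b)
  rw [MV.neg_neg] at h'
  exact h'

lemma le_inf {z a b : α} (hza : le z a) (hzb : le z b) : le z (inf a b) := by
  have h : le (sup (-a) (-b)) (-z) := sup_le (neg_le_neg hza) (neg_le_neg hzb)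
  exact le_neg_swap.mpr h

lemma inf_comm (a b : α) : inf a b = inf b a := by
  show -(sup (-a) (-b)) = -(sup (-b) (-a))
  rw [sup_comm]

lemma inf_of_le {a b : α} (h : le a b) : inf a b = a :=
  le_antisymm (inf_le_left a b) (le_inf (le_refl a) h)

lemma inf_of_le' {a b : α} (h : le a b) : inf b a = a := by
  rw [inf_comm]; exact inf_of_le h

lemma neg_otimes (a b : α) : -(otimes a b) = -a + -b := MV.neg_neg _

lemma neg_add (a b : α) : -(a + b) = otimes (-a) (-b) := by
  show _ = -(- -a + - -b)
  rw [MV.neg_neg, MV.neg_neg]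

lemma otimes_comm (a b : α) : otimes a b = otimes b a := by
  show -(-a + -b) = -(-b + -a)
  rw [MV.add_comm]

lemma otimes_le_left (a b : α) : le (otimes a b) a := by
  show -(otimes a b) + a = one α
  rw [neg_otimes, MV.add_comm (-a) (-b), ← MV.add_assoc, neg_add_self, add_one]

lemma otimes_le_right (a b : α) : le (otimes a b) b := by
  rw [otimes_comm]; exact otimes_le_left b a

lemma resid {a b c : α} : le (otimes a b) c ↔ le a (imp b c) := by
  show -(otimes a b) + c = one α ↔ -a + (-b + c) = one α
  rw [neg_otimes, ← MV.add_assoc]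

lemma le_imp_otimes (a c : α) : le a (imp c (otimes a c)) := by
  show -a + (-c + otimes a c) = one α
  rw [MV.add_assoc]
  exact add_neg_self (-a + -c)

lemma otimes_mono_right {b c : α} (h : le b c) (a : α) : le (otimes a b) (otimes a c) := by
  apply resid.mpr
  have h1 : le (imp c (otimes a c)) (imp b (otimes a c)) :=
    le_add_mono (neg_le_neg h) (otimes a c)
  exact le_trans (le_imp_otimes a c) h1

lemma otimes_mono_left {b c : α} (h : le b c) (a : α) : le (otimes b a) (otimes c a) := by
  rw [otimes_comm b a, otimes_comm c a]
  exact otimes_mono_right h a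

lemma div (a b : α) : otimes a (imp a b) = inf a b := by
  show -(-a + -(-a + b)) = -(sup (-a) (-b))
  have : sup (-a) (-b) = -(- -a + -b) + -b := rfl
  rw [this, MV.luk (-a) (-b), MV.neg_neg,
    MV.add_comm b (-a), MV.add_comm (-a) (-(-a + b))]

lemma modus (a b : α) : le (otimes a (imp a b)) b := by
  rw [div]; exact inf_le_right a b

lemma sup_eq_otimes_add (z w : α) : sup z w = otimes z (-w) + w := by
  show -(-z + w) + w = -(-z + - -w) + w
  rw [MV.neg_neg]

lemma imp_le_imp_right {c d : α} (h : le c d) (w : α) : le (imp w c) (imp w d) := by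
  apply resid.mp
  rw [otimes_comm, div]
  exact le_trans (inf_le_right w c) h

lemma otimes_right_comm (x w v : α) : otimes (otimes x w) v = otimes (otimes x v) w := by
  show -(-(otimes x w) + -v) = -(-(otimes x v) + -w)
  rw [neg_otimes, neg_otimes, ← MV.add_assoc, ← MV.add_assoc, MV.add_comm (-w) (-v)]

end MVAux
namespace MVAux
open MV
variable {α : Type*} [MV α]

lemma dist_aux {w x y : α} (_hx : le (-w) x) (hy : le (-w) y) :
    le (inf (otimes x w) (otimes y w)) (otimes (inf x y) w) := by
  have hk1 : le (inf (otimes x w) (otimes y w)) (otimes x w) := inf_le_left _ _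
  have hk2 : le (inf (otimes x w) (otimes y w)) (otimes y w) := inf_le_right _ _
  have hdiv : otimes (otimes x w) (imp (otimes x w) (inf (otimes x w) (otimes y w)))
      = inf (otimes x w) (otimes y w) := by
    rw [div, inf_of_le' hk1]
  have h4 : imp w (otimes y w) = y := by
    show -w + otimes y w = y
    rw [MV.add_comm]
    have e1 : otimes y w + -w = sup y (-w) := by rw [sup_eq_otimes_add y (-w), MV.neg_neg]
    rw [e1, sup_comm, sup_of_le hy]
  have h3 : le (imp w (inf (otimes x w) (otimes y w))) y := by
    have h := imp_le_imp_right hk2 w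
    rwa [h4] at h
  have h5 : le (imp (otimes x w) (inf (otimes x w) (otimes y w))) (imp x y) := by
    have heq : imp (otimes x w) (inf (otimes x w) (otimes y w))
        = imp x (imp w (inf (otimes x w) (otimes y w))) := by
      show -(otimes x w) + _ = -x + (-w + _)
      rw [neg_otimes, MV.add_assoc]
    rw [heq]
    exact imp_le_imp_right h3 x
  have h6 := otimes_mono_right h5 (otimes x w)
  rw [hdiv] at h6
  have h7 : otimes (otimes x w) (imp x y) = otimes (inf x y) w := by
    rw [otimes_right_comm, div, otimes_comm]
  rwa [h7] at h6

lemma prelin_core (a b : α) : inf (otimes a (-b)) (otimes b (-a)) = (0 : α) := by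
  have hta : le (inf (otimes a (-b)) (otimes b (-a))) (-a) :=
    le_trans (inf_le_right _ _) (otimes_le_right b (-a))
  have htb : le (inf (otimes a (-b)) (otimes b (-a))) (-b) :=
    le_trans (inf_le_left _ _) (otimes_le_right a (-b))
  set t := inf (otimes a (-b)) (otimes b (-a)) with ht
  have hts : le t (-(sup a b)) := by rw [neg_sup]; exact le_inf hta htb
  have key : le (t + sup a b) (sup a b) := by
    have hD : le (inf (otimes (-a) (-t)) (otimes (-b) (-t))) (otimes (inf (-a) (-b)) (-t)) := by
      apply dist_aux
      · rw [MV.neg_neg]; exact hta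
      · rw [MV.neg_neg]; exact htb
    have hneg1 : -(t + sup a b) = otimes (inf (-a) (-b)) (-t) := by
      rw [neg_add, neg_sup, otimes_comm]
    have hneg2 : -(sup (t + a) (t + b)) = inf (otimes (-a) (-t)) (otimes (-b) (-t)) := by
      rw [neg_sup, neg_add, neg_add, otimes_comm (-t) (-a), otimes_comm (-t) (-b)]
    have hle : le (-(sup (t + a) (t + b))) (-(t + sup a b)) := by
      rw [hneg1, hneg2]; exact hD
    have h1 : le (t + a) (sup a b) := by
      have h := le_add_mono (inf_le_right (otimes a (-b)) (otimes b (-a))) a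
      rw [← ht] at h
      have e : otimes b (-a) + a = sup a b := by
        rw [← sup_eq_otimes_add b a, sup_comm]
      rwa [e] at h
    have h2 : le (t + b) (sup a b) := by
      have h := le_add_mono (inf_le_left (otimes a (-b)) (otimes b (-a))) b
      rw [← ht] at h
      have e : otimes a (-b) + b = sup a b := (sup_eq_otimes_add a b).symm
      rwa [e] at h
    exact le_trans (le_of_neg_le_neg hle) (sup_le h1 h2)
  have step : t = otimes (-(sup a b)) (imp (-(sup a b)) t) := by
    rw [div, inf_of_le' hts]
  have e2 : imp (-(sup a b)) t = sup a b + t := by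
    show -(-(sup a b)) + t = _
    rw [MV.neg_neg]
  have hfin : le t (otimes (-(sup a b)) (sup a b)) := by
    rw [step]
    apply otimes_mono_right
    rw [e2, MV.add_comm (sup a b) t]
    exact key
  have e3 : otimes (-(sup a b)) (sup a b) = (0 : α) := by
    show -(-(-(sup a b)) + -(sup a b)) = (0 : α)
    rw [MV.neg_neg, add_neg_self, neg_one]
  rw [e3] at hfin
  exact le_antisymm hfin (zero_le t)

lemma prelin (a b : α) : sup (imp a b) (imp b a) = one α := by
  have e1 : -(imp a b) = otimes a (-b) := by
    show -(-a + b) = -(-a + - -b); rw [MV.neg_neg]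
  have e2 : -(imp b a) = otimes b (-a) := by
    show -(-b + a) = -(-b + - -a); rw [MV.neg_neg]
  have h : -(sup (imp a b) (imp b a)) = (0 : α) := by
    rw [neg_sup, e1, e2]; exact prelin_core a b
  have := congrArg (fun z => -z) h
  try simp only at this
  rwa [MV.neg_neg] at this

end MVAux
namespace MVAux
open MV
variable {α : Type*} [MV α]

lemma filter_mp {F : Set α} (hF : IsImpFilter F) {x y : α}
    (hx : x ∈ F) (hxy : imp x y ∈ F) : y ∈ F :=
  hF.2.1 _ (hF.2.2.2 x hx _ hxy) y (modus x y)

lemma gen_subset {S G : Set α} (hG : IsImpFilter G) (hSG : S ⊆ G) : gen S ⊆ G :=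
  fun _x hx => hx G ⟨hG, hSG⟩

lemma subset_gen {S : Set α} : S ⊆ gen S := fun _x hx _F hF => hF.2 hx

lemma mem_loc {x p : α} (P : Set α) (hx : x ∉ P) (hp : p ∈ P) : imp x p ∈ locFilter P :=
  subset_gen ⟨x, hx, p, hp, rfl⟩

lemma le_imp_self (p x : α) : le p (imp x p) := by
  show -p + (-x + p) = one α
  rw [MV.add_comm (-x) p, MV.add_assoc, neg_add_self, one_add]

lemma comparable_of_loc {G P : Set α} (hG : IsPrime G) (_hP : IsPrime P)
    (hL : locFilter P ⊆ G) : G ⊆ P ∨ P ⊆ G := by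
  by_cases h : G ⊆ P
  · exact Or.inl h
  · obtain ⟨x, hxG, hxP⟩ := Set.not_subset.mp h
    exact Or.inr fun p hp => filter_mp hG.1 hxG (hL (mem_loc P hxP hp))

lemma loc_subset_of_comparable {G P : Set α} (hG : IsPrime G) (hP : IsPrime P)
    (hcomp : G ⊆ P ∨ P ⊆ G) : locFilter P ⊆ G := by
  apply gen_subset hG.1
  rintro z ⟨x, hx, p, hp, rfl⟩
  rcases hcomp with hGP | hPG
  · have hone : sup (imp x p) (imp p x) ∈ G := by rw [prelin]; exact hG.1.1
    rcases hG.2.2 _ _ hone with h | h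
    · exact h
    · exact absurd (filter_mp hP.1 hp (hGP h)) hx
  · exact hG.1.2.1 p (hPG hp) _ (le_imp_self p x)

end MVAux

namespace MVAux
open MV
variable {α β : Type*} [MV α] [MV β] {f : α → β}

section Hom

lemma f_one (hneg : ∀ x : α, f (-x) = -f x) (hzero : f 0 = 0) : f (one α) = one β := by
  show f (-0) = -(0 : β)
  rw [hneg, hzero]

lemma f_imp (hadd : ∀ x y : α, f (x + y) = f x + f y) (hneg : ∀ x : α, f (-x) = -f x) (a b : α) : f (imp a b) = imp (f a) (f b) := by
  show f (-a + b) = -(f a) + f b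
  rw [hadd, hneg]

lemma f_otimes (hadd : ∀ x y : α, f (x + y) = f x + f y) (hneg : ∀ x : α, f (-x) = -f x) (a b : α) : f (otimes a b) = otimes (f a) (f b) := by
  show f (-(-a + -b)) = -(-(f a) + -(f b))
  rw [hneg, hadd, hneg, hneg]

lemma f_sup (hadd : ∀ x y : α, f (x + y) = f x + f y) (hneg : ∀ x : α, f (-x) = -f x) (a b : α) : f (sup a b) = sup (f a) (f b) := by
  show f (imp (imp a b) b) = imp (imp (f a) (f b)) (f b)
  rw [f_imp hadd hneg, f_imp hadd hneg]

lemma f_inf (hadd : ∀ x y : α, f (x + y) = f x + f y) (hneg : ∀ x : α, f (-x) = -f x) (a b : α) : f (inf a b) = inf (f a) (f b) := by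
  show f (-(sup (-a) (-b))) = -(sup (-(f a)) (-(f b)))
  rw [hneg, f_sup hadd hneg, hneg, hneg]

lemma f_le (hadd : ∀ x y : α, f (x + y) = f x + f y) (hneg : ∀ x : α, f (-x) = -f x) (hzero : f 0 = 0) {a b : α} (h : le a b) : le (f a) (f b) := by
  show imp (f a) (f b) = one β
  rw [← f_imp hadd hneg]
  have h' : imp a b = one α := h
  rw [h', f_one hneg hzero]

end Hom
end MVAux
namespace MVAux
open MV
variable {α β : Type*} [MV α] [MV β] {f : α → β}

lemma preimage_prime (hadd : ∀ x y : α, f (x + y) = f x + f y)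
    (hneg : ∀ x : α, f (-x) = -f x) (hzero : f 0 = 0)
    (hsurj : Function.Surjective f) {F : Set β} (hF : IsPrime F) :
    IsPrime (f ⁻¹' F) := by
  obtain ⟨⟨hone, hup, hinf, hot⟩, hproper, hprime⟩ := hF
  refine ⟨⟨?_, ?_, ?_, ?_⟩, ?_, ?_⟩
  · show f (one α) ∈ F
    rw [f_one hneg hzero]; exact hone
  · intro x hx y hxy
    exact hup _ hx _ (f_le hadd hneg hzero hxy)
  · intro x hx y hy
    show f (inf x y) ∈ F
    rw [f_inf hadd hneg]; exact hinf _ hx _ hy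
  · intro x hx y hy
    show f (otimes x y) ∈ F
    rw [f_otimes hadd hneg]; exact hot _ hx _ hy
  · intro h
    apply hproper
    apply Set.eq_univ_iff_forall.mpr
    intro b
    obtain ⟨a, rfl⟩ := hsurj b
    have : a ∈ f ⁻¹' F := h ▸ Set.mem_univ a
    exact this
  · intro x y hxy
    have : sup (f x) (f y) ∈ F := by
      rw [← f_sup hadd hneg]; exact hxy
    exact hprime _ _ this

lemma mem_of_feq (hadd : ∀ x y : α, f (x + y) = f x + f y)
    (hneg : ∀ x : α, f (-x) = -f x)
    {P G : Set α} (hG : IsImpFilter G) (hL : locFilter P ⊆ G)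
    (hker : ∀ x : α, f x = one β ↔ x ∈ locFilter P)
    {g a : α} (heq : f g = f a) (hg : g ∈ G) : a ∈ G := by
  have h1 : f (imp g a) = one β := by
    rw [f_imp hadd hneg, heq]
    exact neg_add_self (f a)
  exact filter_mp hG hg (hL ((hker _).mp h1))

lemma image_prime (hadd : ∀ x y : α, f (x + y) = f x + f y)
    (hneg : ∀ x : α, f (-x) = -f x) (hzero : f 0 = 0)
    (hsurj : Function.Surjective f) {P G : Set α} (hG : IsPrime G)
    (hL : locFilter P ⊆ G)
    (hker : ∀ x : α, f x = one β ↔ x ∈ locFilter P) :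
    IsPrime (f '' G) := by
  refine ⟨⟨⟨one α, hG.1.1, f_one hneg hzero⟩, ?_, ?_, ?_⟩, ?_, ?_⟩
  · rintro x ⟨g, hg, rfl⟩ y hxy
    obtain ⟨a, rfl⟩ := hsurj y
    refine ⟨sup g a, hG.1.2.1 g hg _ (le_sup_left g a), ?_⟩
    rw [f_sup hadd hneg]
    exact sup_of_le hxy
  · rintro x ⟨g, hg, rfl⟩ y ⟨g', hg', rfl⟩
    exact ⟨inf g g', hG.1.2.2.1 g hg g' hg', f_inf hadd hneg g g'⟩
  · rintro x ⟨g, hg, rfl⟩ y ⟨g', hg', rfl⟩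
    exact ⟨otimes g g', hG.1.2.2.2 g hg g' hg', f_otimes hadd hneg g g'⟩
  · intro h
    apply hG.2.1
    apply Set.eq_univ_iff_forall.mpr
    intro a
    have : f a ∈ f '' G := h ▸ Set.mem_univ (f a)
    obtain ⟨g, hg, hfg⟩ := this
    exact mem_of_feq hadd hneg hG.1 hL hker hfg hg
  · intro u v huv
    obtain ⟨a, rfl⟩ := hsurj u
    obtain ⟨b, rfl⟩ := hsurj v
    rw [← f_sup hadd hneg] at huv
    obtain ⟨g, hg, hfg⟩ := huv
    have : sup a b ∈ G := mem_of_feq hadd hneg hG.1 hL hker hfg hg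
    rcases hG.2.2 _ _ this with h | h
    · exact Or.inl ⟨a, h, rfl⟩
    · exact Or.inr ⟨b, h, rfl⟩

end MVAux

open MV
/-- The prime spectrum of the localization `L/ℓ(P)` (presented as any
surjective MV-morphism with shell `ℓ(P)`) is order-isomorphic to `PSpec(P)`. -/
theorem pspec_localization_orderIso {α β : Type*} [MV α] [MV β] (f : α → β)
    (hadd : ∀ x y : α, f (x + y) = f x + f y)
    (hneg : ∀ x : α, f (-x) = -f x) (hzero : f 0 = 0)
    (hsurj : Function.Surjective f)
    (P : Set α) (hP : IsPrime P)
    (hker : ∀ x : α, f x = one β ↔ x ∈ locFilter P) :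
    Nonempty ({F : Set β // IsPrime F} ≃o {F : Set α // IsPrime F ∧ (F ⊆ P ∨ P ⊆ F)}) := by
  constructor
  refine
    { toFun := fun F => ⟨f ⁻¹' F.1,
        MVAux.preimage_prime hadd hneg hzero hsurj F.2,
        MVAux.comparable_of_loc (MVAux.preimage_prime hadd hneg hzero hsurj F.2) hP
          (fun z hz => show f z ∈ F.1 by rw [(hker z).mpr hz]; exact F.2.1.1)⟩,
      invFun := fun G => ⟨f '' G.1,
        MVAux.image_prime hadd hneg hzero hsurj G.2.1
          (MVAux.loc_subset_of_comparable G.2.1 hP G.2.2) hker⟩,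
      left_inv := fun F => Subtype.ext (Set.image_preimage_eq F.1 hsurj),
      right_inv := fun G => Subtype.ext ?_,
      map_rel_iff' := ?_ }
  · -- f ⁻¹' (f '' G.1) = G.1
    apply Set.Subset.antisymm
    · rintro a ⟨g, hg, hfg⟩
      exact MVAux.mem_of_feq hadd hneg G.2.1.1
        (MVAux.loc_subset_of_comparable G.2.1 hP G.2.2) hker hfg hg
    · exact Set.subset_preimage_image f G.1
  · intro F₁ F₂
    show f ⁻¹' F₁.1 ⊆ f ⁻¹' F₂.1 ↔ F₁.1 ⊆ F₂.1
    constructor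
    · intro h b hb
      obtain ⟨a, rfl⟩ := hsurj b
      exact h hb
    · intro h
      exact Set.preimage_mono h
end

section
/- In an MV-algebra, if a prime implication filter P contains all counits, then P is comparable to every prime implication filter; hence the Conrad filter N, when proper, is the minimum prime implication filter comparable to all prime implication filters. -/
namespace MV

variable {α : Type*} [MV α]

/-! ### Basic arithmetic lemmas -/

theorem assoc' (a b c : α) : (a + b) + c = a + (b + c) := (add_assoc a b c).symm

theorem left_comm' (a b c : α) : a + (b + c) = b + (a + c) := by
  rw [add_assoc, add_comm a b, ← add_assoc]

theorem zero_add' (a : α) : (0 : α) + a = a := by rw [add_comm]; exact add_zero a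

theorem add_one' (a : α) : a + one α = one α := add_neg_zero a

theorem one_add' (a : α) : one α + a = one α := by rw [add_comm]; exact add_one' a

theorem neg_one' : -(one α) = (0 : α) := neg_neg 0

theorem neg_add_self' (a : α) : -a + a = one α := by
  have h := luk a (one α)
  rw [add_one', neg_one', zero_add'] at h
  exact h.symm

theorem add_neg_self' (a : α) : a + -a = one α := by rw [add_comm]; exact neg_add_self' a

theorem le_refl' (a : α) : le a a := neg_add_self' a

theorem le_one' (a : α) : le a (one α) := add_one' (-a)

theorem eq_one_of_one_le {a : α} (h : le (one α) a) : a = one α := by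
  have h' : -(one α) + a = one α := h
  rw [neg_one', zero_add'] at h'
  exact h'

theorem le_antisymm' {a b : α} (h1 : le a b) (h2 : le b a) : a = b := by
  have h1' : -a + b = one α := h1
  have h2' : -b + a = one α := h2
  have hl := luk a b
  rw [h1', h2', neg_one', zero_add', zero_add'] at hl
  exact hl.symm

theorem le_add_right' (a b : α) : le a (a + b) := by
  show -a + (a + b) = one α
  rw [add_assoc, neg_add_self', one_add']

theorem le_add_left' (a b : α) : le a (b + a) := by
  rw [add_comm]; exact le_add_right' a b

theorem le_exists' {a b : α} (h : le a b) : ∃ c : α, b = a + c := by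
  refine ⟨-(-b + a), ?_⟩
  have h' : -a + b = one α := h
  have hl := luk a b
  rw [h', neg_one', zero_add'] at hl
  exact hl.trans (add_comm _ _)

theorem le_trans' {a b c : α} (h1 : le a b) (h2 : le b c) : le a c := by
  obtain ⟨d, rfl⟩ := le_exists' h1
  obtain ⟨e, rfl⟩ := le_exists' h2
  show -a + ((a + d) + e) = one α
  rw [assoc', add_assoc, neg_add_self', one_add']

theorem add_le_add_left' {a b : α} (h : le a b) (c : α) : le (c + a) (c + b) := by
  obtain ⟨d, rfl⟩ := le_exists' h
  show le (c + a) (c + (a + d))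
  rw [add_assoc]
  exact le_add_right' _ _

theorem add_le_add_right' {a b : α} (h : le a b) (c : α) : le (a + c) (b + c) := by
  rw [add_comm a c, add_comm b c]; exact add_le_add_left' h c

theorem neg_le_neg' {a b : α} (h : le a b) : le (-b) (-a) := by
  show -(-b) + -a = one α
  rw [neg_neg, add_comm]
  exact h

/-! ### sup lemmas -/

theorem sup_comm' (a b : α) : sup a b = sup b a := luk a b

theorem le_sup_left' (a b : α) : le a (sup a b) := by
  show -a + (-(-a + b) + b) = one α
  rw [left_comm']
  exact neg_add_self' _

theorem le_sup_right' (a b : α) : le b (sup a b) := le_add_left' b _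

theorem sup_of_le' {a b : α} (h : le a b) : sup a b = b := by
  show -(-a + b) + b = b
  have h' : -a + b = one α := h
  rw [h', neg_one', zero_add']

theorem sup_mono_left {a c : α} (h : le a c) (b : α) : le (sup a b) (sup c b) := by
  show le (-(-a + b) + b) (-(-c + b) + b)
  exact add_le_add_right' (neg_le_neg' (add_le_add_right' (neg_le_neg' h) b)) b

theorem sup_le' {a b c : α} (h1 : le a c) (h2 : le b c) : le (sup a b) c := by
  have s1 : le (sup a b) (sup c b) := sup_mono_left h1 b
  have s2 : sup c b = c := by rw [sup_comm']; exact sup_of_le' h2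
  rw [s2] at s1
  exact s1

/-! ### imp/otimes lemmas -/

theorem imp_otimes' (a b c : α) : imp (otimes a b) c = imp a (imp b c) := by
  show -(-(-a + -b)) + c = -a + (-b + c)
  rw [neg_neg, assoc']

theorem resid {a b c : α} : le (otimes a b) c ↔ le a (imp b c) := by
  unfold le
  rw [imp_otimes']

theorem otimes_comm' (a b : α) : otimes a b = otimes b a := by
  show -(-a + -b) = -(-b + -a)
  rw [add_comm]

theorem otimes_assoc' (a b c : α) : otimes (otimes a b) c = otimes a (otimes b c) := by
  show -(-(-(-a + -b)) + -c) = -(-a + -(-(-b + -c)))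
  rw [neg_neg, neg_neg, assoc']

theorem otimes_left_comm (a b c : α) : otimes a (otimes b c) = otimes b (otimes a c) := by
  rw [← otimes_assoc' a b c, otimes_comm' a b, otimes_assoc' b a c]

theorem otimes_otimes_comm (a b c d : α) :
    otimes (otimes a b) (otimes c d) = otimes (otimes a c) (otimes b d) := by
  rw [otimes_assoc' a b (otimes c d), otimes_left_comm b c d, ← otimes_assoc' a c (otimes b d)]

theorem otimes_one' (a : α) : otimes a (one α) = a := by
  show -(-a + -(one α)) = a
  rw [neg_one', add_zero, neg_neg]

theorem one_otimes' (a : α) : otimes (one α) a = a := by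
  rw [otimes_comm']; exact otimes_one' a

theorem otimes_le_left' (a b : α) : le (otimes a b) a := by
  show -(-(-a + -b)) + a = one α
  rw [neg_neg, add_comm (-a) (-b), assoc', neg_add_self', add_one']

theorem otimes_le_right' (a b : α) : le (otimes a b) b := by
  rw [otimes_comm']; exact otimes_le_left' b a

theorem otimes_mono_left {a b : α} (h : le a b) (c : α) : le (otimes a c) (otimes b c) := by
  show le (-(-a + -c)) (-(-b + -c))
  exact neg_le_neg' (add_le_add_right' (neg_le_neg' h) (-c))

theorem otimes_mono_right {a b : α} (h : le a b) (c : α) : le (otimes c a) (otimes c b) := by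
  rw [otimes_comm' c a, otimes_comm' c b]; exact otimes_mono_left h c

theorem mp' (a b : α) : le (otimes a (imp a b)) b := resid.mpr (le_sup_left' a b)

/-! ### inf lemmas -/

theorem inf_le_left' (a b : α) : le (inf a b) a := by
  have h : le (-a) (sup (-a) (-b)) := le_sup_left' _ _
  have h2 := neg_le_neg' h
  rw [neg_neg] at h2
  exact h2

theorem inf_le_right' (a b : α) : le (inf a b) b := by
  have h : le (-b) (sup (-a) (-b)) := le_sup_right' _ _
  have h2 := neg_le_neg' h
  rw [neg_neg] at h2
  exact h2

theorem le_inf' {a b c : α} (h1 : le c a) (h2 : le c b) : le c (inf a b) := by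
  have h : le (sup (-a) (-b)) (-c) := sup_le' (neg_le_neg' h1) (neg_le_neg' h2)
  have h2' := neg_le_neg' h
  rw [neg_neg] at h2'
  exact h2'

/-! ### The key identities leading to prelinearity -/

theorem sup_eq' (a b : α) : sup a b = otimes a (-b) + b := by
  show -(-a + b) + b = -(-a + -(-b)) + b
  rw [neg_neg]

theorem K' (x y : α) : otimes (x + y) (-y) = otimes x (-(otimes x y)) := by
  show -(-(x + y) + -(-y)) = -(-x + -(-(-(-x + -y))))
  rw [neg_neg y, neg_neg (-(-x + -y))]
  have h := luk (-x) y
  rw [neg_neg x] at h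
  rw [add_comm (-y) (-x)] at h
  rw [add_comm (-(-x + -y)) (-x)] at h
  rw [h]

theorem key_L (x y : α) : (x + y) + otimes x y = x + y := by
  have h1 : sup (x + y) y = x + y := by
    rw [sup_comm']; exact sup_of_le' (le_add_left' y x)
  have h3 : otimes (x + y) (-y) + y = x + y := by rw [← sup_eq']; exact h1
  rw [K'] at h3
  have h5 : sup x (otimes x y) = x := by
    rw [sup_comm']; exact sup_of_le' (otimes_le_left' x y)
  have h6 : otimes x (-(otimes x y)) + otimes x y = x := (sup_eq' x (otimes x y)).symm.trans h5
  calc (x + y) + otimes x y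
      = (otimes x (-(otimes x y)) + y) + otimes x y := by rw [h3]
    _ = (otimes x (-(otimes x y)) + otimes x y) + y := by
        rw [assoc', add_comm y (otimes x y), add_assoc]
    _ = x + y := by rw [h6]

theorem prelin' (a b : α) : sup (imp a b) (imp b a) = one α := by
  have h : -(imp a b) + imp b a = imp b a := by
    show -(-a + b) + (-b + a) = -b + a
    have e1 : -(-a + b) = otimes a (-b) := by
      show -(-a + b) = -(-a + -(-b))
      rw [neg_neg]
    rw [e1]
    have hL := key_L a (-b)
    calc otimes a (-b) + (-b + a)
        = (a + -b) + otimes a (-b) := by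
          rw [add_comm (otimes a (-b)) (-b + a), add_comm (-b) a]
      _ = a + -b := hL
      _ = -b + a := add_comm a (-b)
  show -(-(imp a b) + imp b a) + imp b a = one α
  rw [h]
  exact neg_add_self' _

theorem imp_sup' (x y : α) : imp (sup x y) x = imp y x := by
  rw [sup_comm']
  have e : imp (sup y x) x = sup (imp y x) x := rfl
  rw [e, sup_comm']
  exact sup_of_le' (le_add_left' x (-y))

/-! ### Distributivity of `⊗` over `∨` -/

theorem otimes_sup_left (a b c : α) :
    otimes (sup a b) c = sup (otimes a c) (otimes b c) := by
  apply le_antisymm'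
  · refine resid.mpr (sup_le' ?_ ?_)
    · exact resid.mp (le_sup_left' _ _)
    · exact resid.mp (le_sup_right' _ _)
  · exact sup_le' (otimes_mono_left (le_sup_left' a b) c)
      (otimes_mono_left (le_sup_right' a b) c)

theorem otimes_sup_right (a b c : α) :
    otimes c (sup a b) = sup (otimes c a) (otimes c b) := by
  rw [otimes_comm' c (sup a b), otimes_sup_left, otimes_comm' a c, otimes_comm' b c]

/-! ### pow lemmas -/

theorem pow_zero' (a : α) : pow a 0 = one α := rfl

theorem pow_succ' (a : α) (n : ℕ) : pow a (n + 1) = otimes a (pow a n) := rfl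

theorem pow_one' (a : α) : pow a 1 = a := by
  rw [pow_succ', pow_zero', otimes_one']

theorem pow_add' (a : α) (m n : ℕ) : pow a (m + n) = otimes (pow a m) (pow a n) := by
  induction m with
  | zero => rw [Nat.zero_add, pow_zero', one_otimes']
  | succ k ih =>
      have e : k + 1 + n = (k + n) + 1 := by omega
      rw [e, pow_succ' a (k + n), ih, pow_succ' a k, otimes_assoc']

theorem pow_exp_le {a : α} {m n : ℕ} (h : n ≤ m) : le (pow a m) (pow a n) := by
  obtain ⟨k, rfl⟩ := Nat.exists_eq_add_of_le h
  rw [pow_add']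
  exact otimes_le_left' _ _

theorem pow_mono_base {a b : α} (h : le a b) : ∀ n, le (pow a n) (pow b n)
  | 0 => le_refl' _
  | n + 1 => by
      rw [pow_succ', pow_succ']
      exact le_trans' (otimes_mono_left h _) (otimes_mono_right (pow_mono_base h n) _)

theorem pow_otimes' (a b : α) : ∀ n, pow (otimes a b) n = otimes (pow a n) (pow b n)
  | 0 => by rw [pow_zero', pow_zero', pow_zero', otimes_one']
  | n + 1 => by
      rw [pow_succ', pow_otimes' a b n, pow_succ', pow_succ', otimes_otimes_comm]

theorem pow_mem {F : Set α} (hF : IsImpFilter F) {a : α} (ha : a ∈ F) : ∀ n, pow a n ∈ F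
  | 0 => hF.1
  | n + 1 => hF.2.2.2 a ha (pow a n) (pow_mem hF ha n)

theorem sup_pow_one' {a b : α} (h : sup a b = one α) : ∀ n, sup (pow a n) b = one α
  | 0 => eq_one_of_one_le (le_sup_left' (one α) b)
  | n + 1 => by
      have ih := sup_pow_one' h n
      have key : le (otimes (sup a b) (sup (pow a n) b)) (sup (pow a (n + 1)) b) := by
        rw [otimes_sup_left]
        apply sup_le'
        · rw [otimes_sup_right]
          apply sup_le'
          · exact le_sup_left' (pow a (n + 1)) b
          · exact le_trans' (otimes_le_right' a b) (le_sup_right' _ _)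
        · exact le_trans' (otimes_le_left' b _) (le_sup_right' _ _)
      rw [h, ih, otimes_one'] at key
      exact eq_one_of_one_le key

theorem pow_sup_le' (x y : α) (n k : ℕ) :
    le (pow (sup x y) (n + k)) (sup (pow x n) (pow y k)) := by
  have h2 : sup (pow (imp y x) n) (pow (imp x y) k) = one α := by
    have hcd := prelin' x y
    have h1 := sup_pow_one' hcd k
    rw [sup_comm'] at h1
    exact sup_pow_one' h1 n
  have hsd : le (otimes (sup x y) (imp y x)) x := by
    have e := imp_sup' x y
    rw [← e]
    exact mp' (sup x y) x
  have hsc : le (otimes (sup x y) (imp x y)) y := by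
    have e : imp (sup x y) y = imp x y := by
      rw [sup_comm']; exact imp_sup' y x
    rw [← e]
    exact mp' (sup x y) y
  have expand := otimes_sup_right (pow (imp y x) n) (pow (imp x y) k) (pow (sup x y) (n + k))
  rw [h2, otimes_one'] at expand
  rw [expand]
  apply sup_le'
  · have t1 : le (otimes (pow (sup x y) (n + k)) (pow (imp y x) n))
        (otimes (pow (sup x y) n) (pow (imp y x) n)) :=
      otimes_mono_left (pow_exp_le (Nat.le_add_right n k)) _
    have t4 : le (otimes (pow (sup x y) n) (pow (imp y x) n)) (pow x n) := by
      rw [← pow_otimes']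
      exact pow_mono_base hsd n
    exact le_trans' (le_trans' t1 t4) (le_sup_left' _ _)
  · have t1 : le (otimes (pow (sup x y) (n + k)) (pow (imp x y) k))
        (otimes (pow (sup x y) k) (pow (imp x y) k)) :=
      otimes_mono_left (pow_exp_le (Nat.le_add_left k n)) _
    have t4 : le (otimes (pow (sup x y) k) (pow (imp x y) k)) (pow y k) := by
      rw [← pow_otimes']
      exact pow_mono_base hsc k
    exact le_trans' (le_trans' t1 t4) (le_sup_right' _ _)

/-! ### Generated filters -/

theorem gen_isFilter (S : Set α) : IsImpFilter (gen S) := by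
  refine ⟨?_, ?_, ?_, ?_⟩
  · exact Set.mem_sInter.mpr fun F hF => hF.1.1
  · intro x hx y hxy
    exact Set.mem_sInter.mpr fun F hF => hF.1.2.1 x (Set.mem_sInter.mp hx F hF) y hxy
  · intro x hx y hy
    exact Set.mem_sInter.mpr fun F hF =>
      hF.1.2.2.1 x (Set.mem_sInter.mp hx F hF) y (Set.mem_sInter.mp hy F hF)
  · intro x hx y hy
    exact Set.mem_sInter.mpr fun F hF =>
      hF.1.2.2.2 x (Set.mem_sInter.mp hx F hF) y (Set.mem_sInter.mp hy F hF)

theorem gen_subset {S F : Set α} (hF : IsImpFilter F) (hS : S ⊆ F) : gen S ⊆ F :=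
  fun _ hz => Set.mem_sInter.mp hz F ⟨hF, hS⟩

theorem subset_gen {S : Set α} : S ⊆ gen S :=
  fun _ hu => Set.mem_sInter.mpr fun _ hF => hF.2 hu

/-- Product of a list of elements. -/
def listProd : List α → α
  | [] => one α
  | u :: l => otimes u (listProd l)

theorem listProd_mem {F : Set α} (hF : IsImpFilter F) :
    ∀ l : List α, (∀ u ∈ l, u ∈ F) → listProd l ∈ F
  | [], _ => hF.1
  | u :: l, h =>
      hF.2.2.2 u (h u (List.mem_cons_self)) (listProd l)
        (listProd_mem hF l fun w hw => h w (List.mem_cons_of_mem u hw))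

theorem listProd_append (l1 l2 : List α) :
    listProd (l1 ++ l2) = otimes (listProd l1) (listProd l2) := by
  induction l1 with
  | nil => rw [List.nil_append]; exact (one_otimes' _).symm
  | cons u l ih =>
      show otimes u (listProd (l ++ l2)) = otimes (otimes u (listProd l)) (listProd l2)
      rw [ih, otimes_assoc']

theorem mem_gen_iff {S : Set α} {z : α} :
    z ∈ gen S ↔ ∃ l : List α, (∀ u ∈ l, u ∈ S) ∧ le (listProd l) z := by
  constructor
  · intro hz
    refine Set.mem_sInter.mp hz
      {w : α | ∃ l : List α, (∀ u ∈ l, u ∈ S) ∧ le (listProd l) w} ⟨⟨?_, ?_, ?_, ?_⟩, ?_⟩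
    · exact ⟨[], by simp, le_refl' _⟩
    · rintro x ⟨l, hl, hle⟩ y hxy
      exact ⟨l, hl, le_trans' hle hxy⟩
    · rintro x ⟨l1, hl1, h1⟩ y ⟨l2, hl2, h2⟩
      refine ⟨l1 ++ l2, ?_, ?_⟩
      · intro u hu
        rcases List.mem_append.mp hu with h | h
        · exact hl1 u h
        · exact hl2 u h
      · rw [listProd_append]
        exact le_inf' (le_trans' (otimes_le_left' _ _) h1)
          (le_trans' (otimes_le_right' _ _) h2)
    · rintro x ⟨l1, hl1, h1⟩ y ⟨l2, hl2, h2⟩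
      refine ⟨l1 ++ l2, ?_, ?_⟩
      · intro u hu
        rcases List.mem_append.mp hu with h | h
        · exact hl1 u h
        · exact hl2 u h
      · rw [listProd_append]
        exact le_trans' (otimes_mono_left h1 _) (otimes_mono_right h2 _)
    · intro u hu
      exact ⟨[u], by simpa using hu, otimes_le_left' u (one α)⟩
  · rintro ⟨l, hl, hle⟩
    refine Set.mem_sInter.mpr fun F hF => ?_
    exact hF.1.2.1 _ (listProd_mem hF.1 l fun w hw => hF.2 (hl w hw)) z hle

/-! ### Main structural lemmas -/

theorem comparable_of_counits {P Q : Set α} (hP : IsImpFilter P)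
    (hQ : IsImpFilter Q) (hc : ∀ u : α, IsCounit u → u ∈ P) : Q ⊆ P ∨ P ⊆ Q := by
  by_cases hQP : Q ⊆ P
  · exact Or.inl hQP
  · right
    obtain ⟨q, hqQ, hqP⟩ := Set.not_subset.mp hQP
    intro p hp
    by_contra hpQ
    by_cases ha : imp q p = one α
    · exact hpQ (hQ.2.1 q hqQ p ha)
    by_cases hb : imp p q = one α
    · exact hqP (hP.2.1 p hp q hb)
    · have hbc : IsCounit (imp p q) :=
        ⟨⟨le_one' _, hb⟩, imp q p, ⟨le_one' _, ha⟩, by rw [sup_comm']; exact prelin' q p⟩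
      have hbP := hc _ hbc
      have hmem : otimes p (imp p q) ∈ P := hP.2.2.2 p hp _ hbP
      exact hqP (hP.2.1 _ hmem q (mp' p q))

theorem counit_mem_conrad {u : α} (hu : IsCounit u) : u ∈ conrad α := subset_gen hu

theorem conrad_prime (hne : conrad α ≠ Set.univ) : IsPrime (conrad α) := by
  refine ⟨gen_isFilter _, hne, ?_⟩
  intro x y hxy
  by_cases hd : imp y x = one α
  · left
    have e : sup x y = x := by rw [sup_comm']; exact sup_of_le' hd
    rwa [e] at hxy
  by_cases hc : imp x y = one α
  · right
    have e : sup x y = y := sup_of_le' hc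
    rwa [e] at hxy
  · left
    obtain ⟨l, hl, hle⟩ := mem_gen_iff.mp hxy
    refine mem_gen_iff.mpr ⟨imp y x :: l, ?_, ?_⟩
    · intro u hu
      rcases List.mem_cons.mp hu with h | h
      · rw [h]
        exact ⟨⟨le_one' _, hd⟩, imp x y, ⟨le_one' _, hc⟩, by rw [sup_comm']; exact prelin' x y⟩
      · exact hl u h
    · show le (otimes (imp y x) (listProd l)) x
      have s1 : le (otimes (imp y x) (listProd l)) (otimes (imp y x) (sup x y)) :=
        otimes_mono_right hle _
      have s2 : le (otimes (imp y x) (sup x y)) x := by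
        rw [otimes_comm']
        have e := imp_sup' x y
        rw [← e]
        exact mp' (sup x y) x
      exact le_trans' s1 s2

theorem exists_prime_not_mem {u v : α} (hsup : sup u v = one α) (hv : v ≠ one α) :
    ∃ M : Set α, IsPrime M ∧ u ∈ M ∧ v ∉ M := by
  set S : Set (Set α) := {F | IsImpFilter F ∧ u ∈ F ∧ v ∉ F} with hSdef
  have hF0 : {z : α | ∃ n : ℕ, le (pow u n) z} ∈ S := by
    refine ⟨⟨⟨0, le_refl' _⟩, ?_, ?_, ?_⟩, ⟨1, by rw [pow_one']; exact le_refl' u⟩, ?_⟩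
    · rintro x ⟨n, hn⟩ y hxy
      exact ⟨n, le_trans' hn hxy⟩
    · rintro x ⟨n, hn⟩ y ⟨m, hm⟩
      refine ⟨n + m, ?_⟩
      rw [pow_add']
      exact le_inf' (le_trans' (otimes_le_left' _ _) hn) (le_trans' (otimes_le_right' _ _) hm)
    · rintro x ⟨n, hn⟩ y ⟨m, hm⟩
      refine ⟨n + m, ?_⟩
      rw [pow_add']
      exact le_trans' (otimes_mono_left hn _) (otimes_mono_right hm _)
    · rintro ⟨n, hn⟩
      have h1 : sup (pow u n) v = one α := sup_pow_one' hsup n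
      rw [sup_of_le' hn] at h1
      exact hv h1
  have hub : ∀ c ⊆ S, IsChain (· ⊆ ·) c → c.Nonempty → ∃ ub ∈ S, ∀ s ∈ c, s ⊆ ub := by
    intro c hcS hchain hcne
    obtain ⟨F1, hF1⟩ := hcne
    refine ⟨⋃₀ c, ⟨⟨?_, ?_, ?_, ?_⟩, ?_, ?_⟩, fun s hs => Set.subset_sUnion_of_mem hs⟩
    · exact ⟨F1, hF1, (hcS hF1).1.1⟩
    · rintro x ⟨F, hF, hxF⟩ y hxy
      exact ⟨F, hF, (hcS hF).1.2.1 x hxF y hxy⟩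
    · rintro x ⟨F, hF, hx⟩ y ⟨G, hG, hy⟩
      have htot : F ⊆ G ∨ G ⊆ F := by
        rcases eq_or_ne F G with rfl | hne
        · exact Or.inl subset_rfl
        · exact hchain hF hG hne
      rcases htot with h | h
      · exact ⟨G, hG, (hcS hG).1.2.2.1 x (h hx) y hy⟩
      · exact ⟨F, hF, (hcS hF).1.2.2.1 x hx y (h hy)⟩
    · rintro x ⟨F, hF, hx⟩ y ⟨G, hG, hy⟩
      have htot : F ⊆ G ∨ G ⊆ F := by
        rcases eq_or_ne F G with rfl | hne
        · exact Or.inl subset_rfl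
        · exact hchain hF hG hne
      rcases htot with h | h
      · exact ⟨G, hG, (hcS hG).1.2.2.2 x (h hx) y hy⟩
      · exact ⟨F, hF, (hcS hF).1.2.2.2 x hx y (h hy)⟩
    · exact ⟨F1, hF1, (hcS hF1).2.1⟩
    · rintro ⟨F, hF, hvF⟩
      exact (hcS hF).2.2 hvF
  obtain ⟨M, -, hMmax⟩ := zorn_subset_nonempty S hub _ hF0
  · have hM : M ∈ S := hMmax.1
    have hMfil : IsImpFilter M := hM.1
    have huM : u ∈ M := hM.2.1
    have hvM : v ∉ M := hM.2.2
    refine ⟨M, ⟨hMfil, ?_, ?_⟩, huM, hvM⟩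
    · intro h
      exact hvM (h ▸ Set.mem_univ v)
    · intro x y hxy
      by_contra hcon
      push_neg at hcon
      obtain ⟨hx, hy⟩ := hcon
      have hext : ∀ w : α, w ∉ M → ∃ m ∈ M, ∃ n : ℕ, le (otimes m (pow w n)) v := by
        intro w hw
        by_contra hno
        push_neg at hno
        have hMwfil : IsImpFilter {z : α | ∃ m ∈ M, ∃ n : ℕ, le (otimes m (pow w n)) z} := by
          refine ⟨⟨one α, hMfil.1, 0, le_one' _⟩, ?_, ?_, ?_⟩
          · rintro z1 ⟨m, hm, n, hn⟩ z2 hz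
            exact ⟨m, hm, n, le_trans' hn hz⟩
          · rintro z1 ⟨m1, hm1, n1, h1⟩ z2 ⟨m2, hm2, n2, h2⟩
            refine ⟨otimes m1 m2, hMfil.2.2.2 _ hm1 _ hm2, n1 + n2, ?_⟩
            rw [pow_add', otimes_otimes_comm]
            exact le_inf' (le_trans' (otimes_le_left' _ _) h1)
              (le_trans' (otimes_le_right' _ _) h2)
          · rintro z1 ⟨m1, hm1, n1, h1⟩ z2 ⟨m2, hm2, n2, h2⟩
            refine ⟨otimes m1 m2, hMfil.2.2.2 _ hm1 _ hm2, n1 + n2, ?_⟩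
            rw [pow_add', otimes_otimes_comm]
            exact le_trans' (otimes_mono_left h1 _) (otimes_mono_right h2 _)
        have hsub : M ⊆ {z : α | ∃ m ∈ M, ∃ n : ℕ, le (otimes m (pow w n)) z} := by
          intro m hm
          refine ⟨m, hm, 0, ?_⟩
          rw [pow_zero', otimes_one']
          exact le_refl' m
        have hMwS : {z : α | ∃ m ∈ M, ∃ n : ℕ, le (otimes m (pow w n)) z} ∈ S := by
          refine ⟨hMwfil, hsub huM, ?_⟩
          rintro ⟨m, hm, n, hn⟩
          exact hno m hm n hn
        have hback := hMmax.2 hMwS hsub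
        apply hw
        apply hback
        refine ⟨one α, hMfil.1, 1, ?_⟩
        rw [pow_one', one_otimes']
        exact le_refl' w
      obtain ⟨m1, hm1, n1, h1⟩ := hext x hx
      obtain ⟨m2, hm2, n2, h2⟩ := hext y hy
      have hm : otimes m1 m2 ∈ M := hMfil.2.2.2 _ hm1 _ hm2
      have hs : pow (sup x y) (n1 + n2) ∈ M := pow_mem hMfil hxy _
      have ht : otimes (otimes m1 m2) (pow (sup x y) (n1 + n2)) ∈ M := hMfil.2.2.2 _ hm _ hs
      have hle : le (otimes (otimes m1 m2) (pow (sup x y) (n1 + n2))) v := by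
        have e1 : le (pow (sup x y) (n1 + n2)) (sup (pow x n1) (pow y n2)) :=
          pow_sup_le' x y n1 n2
        have e2 : le (otimes (otimes m1 m2) (pow (sup x y) (n1 + n2)))
            (otimes (otimes m1 m2) (sup (pow x n1) (pow y n2))) := otimes_mono_right e1 _
        have e3 := otimes_sup_right (pow x n1) (pow y n2) (otimes m1 m2)
        rw [e3] at e2
        have e4 : le (otimes (otimes m1 m2) (pow x n1)) v :=
          le_trans' (otimes_mono_left (otimes_le_left' m1 m2) _) h1
        have e5 : le (otimes (otimes m1 m2) (pow y n2)) v :=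
          le_trans' (otimes_mono_left (otimes_le_right' m1 m2) _) h2
        exact le_trans' e2 (sup_le' e4 e5)
      exact hvM (hMfil.2.1 _ ht v hle)

theorem conrad_min {P : Set α} (hP : IsPrime P)
    (hcomp : ∀ Q : Set α, IsPrime Q → Q ⊆ P ∨ P ⊆ Q) : conrad α ⊆ P := by
  apply gen_subset hP.1
  intro u hu
  obtain ⟨⟨hule, hune⟩, v, ⟨hvle, hvne⟩, hsup⟩ := hu
  by_contra huP
  have hvP : v ∈ P := by
    have h1 : one α ∈ P := hP.1.1
    have h2 := hP.2.2 u v (by rw [hsup]; exact h1)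
    rcases h2 with h | h
    · exact absurd h huP
    · exact h
  obtain ⟨M, hMp, huM, hvM⟩ := exists_prime_not_mem hsup hvne
  rcases hcomp M hMp with h | h
  · exact huP (h huM)
  · exact hvM (h hvP)

end MV

open MV
/-- A prime filter containing all counits is comparable to every prime
filter; hence a proper Conrad filter is the minimum prime comparable to all primes. -/
theorem conrad_minimum_comparable {α : Type*} [MV α] :
    (∀ P : Set α, IsPrime P → (∀ u : α, IsCounit u → u ∈ P) →
      ∀ Q : Set α, IsPrime Q → Q ⊆ P ∨ P ⊆ Q) ∧
    (conrad α ≠ Set.univ →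
      IsPrime (conrad α) ∧
      (∀ Q : Set α, IsPrime Q → Q ⊆ conrad α ∨ conrad α ⊆ Q) ∧
      ∀ P : Set α, IsPrime P → (∀ Q : Set α, IsPrime Q → Q ⊆ P ∨ P ⊆ Q) →
        conrad α ⊆ P) := by
  constructor
  · intro P hP hc Q hQ
    exact MV.comparable_of_counits hP.1 hQ.1 hc
  · intro hne
    refine ⟨MV.conrad_prime hne, ?_, ?_⟩
    · intro Q hQ
      exact MV.comparable_of_counits (MV.gen_isFilter _) hQ.1
        (fun u hu => MV.counit_mem_conrad hu)
    · intro P hP hcomp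
      exact MV.conrad_min hP hcomp
end
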